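/- Let P be a finite bounded poset with |P| > 1. The poset Antb(P) of blockers in P (the image of the blocker map, with the order induced from Ant(P)) is self-dual: the restriction of the blocker map b to Antb(P) is an order-reversing bijection of Antb(P) onto itself, i.e., for B₁, B₂ ∈ Antb(P), B₁ ≤ B₂ if and only if b(B₁) ≥ b(B₂). -/

import Mathlib

open scoped Classical
open Set
set_option linter.unusedSectionVars false

/-- The order filter generated by a subset. -/
def upFilter (P : Type*) [Preorder P] (S : Set P) : Set P := {x | ∃ s ∈ S, s ≤ x}

/-- The set of minimal elements of a subset. -/
def minsOf (P : Type*) [Preorder P] (S : Set P) : Set P := {x | Minimal (· ∈ S) x}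

/-- The set of intersecters for `A` in `P`. -/
def inters (P : Type*) [PartialOrder P] [OrderBot P] (A : Set P) : Set P :=
  if A = ∅ then Set.univ
  else if A = {(⊥ : P)} then ∅
  else {b | ∀ a ∈ A, a ≠ ⊥ → ∃ z : P, IsAtom z ∧ z ≤ b ∧ z ≤ a}

/-- The set of complementers for `A` in `P`. -/
def compls (P : Type*) [PartialOrder P] [OrderBot P] (A : Set P) : Set P := (inters P A)ᶜ

/-- The blocker map: the set of minimal intersecters for `A` in `P`. -/
def bmap (P : Type*) [PartialOrder P] [OrderBot P] (A : Set P) : Set P := minsOf P (inters P A)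

/-- The set of blockers in `P`: the image of the blocker map on antichains. -/
def Antb (P : Type*) [PartialOrder P] [OrderBot P] : Set (Set P) :=
  bmap P '' {A : Set P | IsAntichain (· ≤ ·) A}

section Aux

variable {P : Type*} [PartialOrder P] [OrderBot P]

lemma minsOf_subset (S : Set P) : minsOf P S ⊆ S := fun _ hx => hx.1

lemma minsOf_antichain (S : Set P) : IsAntichain (· ≤ ·) (minsOf P S) := by
  intro x hx y hy hne hle
  exact hne (le_antisymm hle (hy.2 hx.1 hle))

lemma bmap_antichain (A : Set P) : IsAntichain (· ≤ ·) (bmap P A) :=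
  minsOf_antichain _

lemma inters_upclosed {A : Set P} {x y : P} (hx : x ∈ inters P A) (hxy : x ≤ y) :
    y ∈ inters P A := by
  unfold inters at hx ⊢
  split_ifs at hx ⊢ with h1 h2
  · exact Set.mem_univ _
  · exact hx.elim
  · intro a ha hab
    obtain ⟨z, hz, hzx, hza⟩ := hx a ha hab
    exact ⟨z, hz, hzx.trans hxy, hza⟩

lemma mem_upFilter_self {A : Set P} {a : P} (ha : a ∈ A) : a ∈ upFilter P A :=
  ⟨a, ha, le_refl a⟩

lemma upFilter_minsOf [Finite P] {S : Set P}
    (hS : ∀ ⦃x y : P⦄, x ∈ S → x ≤ y → y ∈ S) :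
    upFilter P (minsOf P S) = S := by
  ext x
  constructor
  · rintro ⟨m, hm, hmx⟩
    exact hS hm.1 hmx
  · intro hx
    obtain ⟨b, hbx, hb⟩ := exists_minimal_le_of_wellFoundedLT (· ∈ S) _ hx
    exact ⟨b, hb, hbx⟩

lemma upFilter_bmap [Finite P] (A : Set P) :
    upFilter P (bmap P A) = inters P A :=
  upFilter_minsOf (fun _ _ hx hxy => inters_upclosed hx hxy)

lemma inters_empty : inters P (∅ : Set P) = Set.univ := by
  unfold inters; simp

lemma inters_bot : inters P ({⊥} : Set P) = (∅ : Set P) := by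
  unfold inters
  rw [if_neg (by simp), if_pos rfl]

lemma inters_main {A : Set P} (h1 : A ≠ ∅) (h2 : A ≠ {⊥}) :
    inters P A = {b | ∀ a ∈ A, a ≠ ⊥ → ∃ z : P, IsAtom z ∧ z ≤ b ∧ z ≤ a} := by
  unfold inters
  rw [if_neg h1, if_neg h2]

lemma bmap_empty : bmap P (∅ : Set P) = {⊥} := by
  unfold bmap
  rw [inters_empty]
  ext x
  simp only [minsOf, Set.mem_setOf_eq, Set.mem_singleton_iff]
  constructor
  · intro hx
    exact le_antisymm (hx.2 (Set.mem_univ ⊥) bot_le) bot_le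
  · rintro rfl
    exact ⟨Set.mem_univ _, fun y _ _ => bot_le⟩

lemma bmap_bot : bmap P ({⊥} : Set P) = (∅ : Set P) := by
  unfold bmap
  rw [inters_bot]
  ext x
  simp [minsOf, Minimal]

lemma antichain_bot_not_mem {A : Set P} (hA : IsAntichain (· ≤ ·) A)
    (h2 : A ≠ {⊥}) : ⊥ ∉ A := by
  intro hbot
  apply h2
  ext a
  simp only [Set.mem_singleton_iff]
  constructor
  · intro ha
    by_contra hne
    exact hA hbot ha (fun h => hne h.symm) bot_le
  · rintro rfl; exact hbot

variable [OrderTop P] [Fintype P]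

lemma exists_atom_le {a : P} (h : a ≠ ⊥) : ∃ z : P, IsAtom z ∧ z ≤ a :=
  (eq_bot_or_exists_atom_le a).resolve_left h

lemma top_mem_inters_main {A : Set P} (h1 : A ≠ ∅) (h2 : A ≠ {⊥}) :
    (⊤ : P) ∈ inters P A := by
  rw [inters_main h1 h2]
  intro a _ ha
  obtain ⟨z, hz, hza⟩ := exists_atom_le ha
  exact ⟨z, hz, le_top, hza⟩

lemma bot_not_mem_inters_main {A : Set P} (hA : IsAntichain (· ≤ ·) A)
    (h1 : A ≠ ∅) (h2 : A ≠ {⊥}) : (⊥ : P) ∉ inters P A := by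
  rw [inters_main h1 h2]
  intro hx
  obtain ⟨a, ha⟩ := Set.nonempty_iff_ne_empty.mpr h1
  have hane : a ≠ ⊥ := fun h => antichain_bot_not_mem hA h2 (h ▸ ha)
  obtain ⟨z, hz, hzb, _⟩ := hx a ha hane
  exact hz.1 (le_antisymm hzb bot_le)

/-- Facts about `B = bmap A` in the main case. -/
lemma bmap_main_facts {A : Set P} (hA : IsAntichain (· ≤ ·) A)
    (h1 : A ≠ ∅) (h2 : A ≠ {⊥}) :
    bmap P A ≠ ∅ ∧ bmap P A ≠ {⊥} ∧ (⊥ : P) ∉ bmap P A ∧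
      bmap P A ⊆ inters P A := by
  have hsub : bmap P A ⊆ inters P A := minsOf_subset _
  have htop := top_mem_inters_main (P := P) h1 h2
  have hbot := bot_not_mem_inters_main hA h1 h2
  have hbotB : (⊥ : P) ∉ bmap P A := fun h => hbot (hsub h)
  have hne : bmap P A ≠ ∅ := by
    obtain ⟨b, hbx, hb⟩ := exists_minimal_le_of_wellFoundedLT (· ∈ inters P A) _ htop
    exact Set.nonempty_iff_ne_empty.mp ⟨b, hb⟩
  have hne2 : bmap P A ≠ {⊥} := fun h => hbotB (h ▸ rfl)
  exact ⟨hne, hne2, hbotB, hsub⟩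

/-- Symmetry: if every element of `B` intersects every (non-bot) element of `A`... -/
lemma mem_inters_of_meets {B : Set P} (h1 : B ≠ ∅) (h2 : B ≠ {⊥}) {x : P}
    (h : ∀ b ∈ B, b ≠ ⊥ → ∃ z : P, IsAtom z ∧ z ≤ x ∧ z ≤ b) :
    x ∈ inters P B := by
  rw [inters_main h1 h2]; exact h

lemma meets_of_mem_inters {A : Set P} (h1 : A ≠ ∅) (h2 : A ≠ {⊥}) {x : P}
    (hx : x ∈ inters P A) {a : P} (ha : a ∈ A) (hane : a ≠ ⊥) :
    ∃ z : P, IsAtom z ∧ z ≤ x ∧ z ≤ a := by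
  rw [inters_main h1 h2] at hx; exact hx a ha hane

/-- Core of the involution: `inters (bmap (bmap A)) = inters A` for antichains. -/
lemma inters_bmap_bmap {A : Set P} (hA : IsAntichain (· ≤ ·) A) :
    inters P (bmap P (bmap P A)) = inters P A := by
  by_cases h1 : A = ∅
  · subst h1
    rw [bmap_empty, bmap_bot]
  by_cases h2 : A = {⊥}
  · subst h2
    rw [bmap_bot, bmap_empty]
  -- main case
  have hbotA : (⊥ : P) ∉ A := antichain_bot_not_mem hA h2
  set B := bmap P A with hBdef
  obtain ⟨hB1, hB2, hbotB, hBsub⟩ := bmap_main_facts hA h1 h2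
  have hBac : IsAntichain (· ≤ ·) B := bmap_antichain A
  set C := bmap P B with hCdef
  obtain ⟨hC1, hC2, hbotC, hCsub⟩ := bmap_main_facts hBac hB1 hB2
  have hupB : upFilter P B = inters P A := upFilter_bmap A
  have hupC : upFilter P C = inters P B := upFilter_bmap B
  -- (i) B ⊆ inters C
  have hBinC : B ⊆ inters P C := by
    intro b hb
    apply mem_inters_of_meets hC1 hC2
    intro c hc hcne
    obtain ⟨z, hz, hzc, hzb⟩ := meets_of_mem_inters hB1 hB2 (hCsub hc) hb
      (fun h => hbotB (h ▸ hb))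
    exact ⟨z, hz, hzb, hzc⟩
  ext x
  constructor
  · -- inters C ⊆ inters A
    intro hx
    rw [inters_main h1 h2]
    intro a ha hane
    -- a ∈ inters B
    have haB : a ∈ inters P B := by
      apply mem_inters_of_meets hB1 hB2
      intro b hb hbne
      obtain ⟨z, hz, hzb, hza⟩ := meets_of_mem_inters h1 h2 (hBsub hb) ha hane
      exact ⟨z, hz, hza, hzb⟩
    rw [← hupC] at haB
    obtain ⟨c, hc, hca⟩ := haB
    obtain ⟨z, hz, hzx, hzc⟩ := meets_of_mem_inters hC1 hC2 hx hc
      (fun h => hbotC (h ▸ hc))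
    exact ⟨z, hz, hzx, hzc.trans hca⟩
  · -- inters A ⊆ inters C
    intro hx
    rw [← hupB] at hx
    obtain ⟨b, hb, hbx⟩ := hx
    exact inters_upclosed (hBinC hb) hbx

lemma bmap_bmap_of_mem_Antb {B : Set P} (hB : B ∈ Antb P) :
    bmap P (bmap P B) = B := by
  obtain ⟨A, hA, rfl⟩ := hB
  unfold bmap
  rw [show inters P (minsOf P (inters P (minsOf P (inters P A)))) = inters P A from
    inters_bmap_bmap hA]

lemma antichain_of_mem_Antb {B : Set P} (hB : B ∈ Antb P) :
    IsAntichain (· ≤ ·) B := by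
  obtain ⟨A, _, rfl⟩ := hB
  exact bmap_antichain A

lemma bmap_mem_Antb {B : Set P} (hB : B ∈ Antb P) : bmap P B ∈ Antb P :=
  ⟨B, antichain_of_mem_Antb hB, rfl⟩

/-- Contravariance of `inters` with respect to the filter order, for antichains. -/
lemma inters_antitone {A₁ A₂ : Set P} (hac₁ : IsAntichain (· ≤ ·) A₁)
    (hac₂ : IsAntichain (· ≤ ·) A₂)
    (h : upFilter P A₁ ⊆ upFilter P A₂) : inters P A₂ ⊆ inters P A₁ := by
  by_cases h1 : A₁ = ∅
  · subst h1; rw [inters_empty]; exact fun x _ => Set.mem_univ x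
  by_cases h4 : A₂ = {⊥}
  · rw [h4, inters_bot]; exact fun x hx => hx.elim
  by_cases h3 : A₂ = ∅
  · exfalso
    obtain ⟨a, ha⟩ := Set.nonempty_iff_ne_empty.mpr h1
    obtain ⟨s, hs, _⟩ := h (mem_upFilter_self ha)
    subst h3; exact hs
  have hbot₂ : (⊥ : P) ∉ A₂ := antichain_bot_not_mem hac₂ h4
  by_cases h2 : A₁ = {⊥}
  · exfalso
    have : (⊥ : P) ∈ upFilter P A₁ := mem_upFilter_self (h2 ▸ rfl)
    obtain ⟨s, hs, hsle⟩ := h this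
    exact hbot₂ ((le_antisymm hsle bot_le) ▸ hs)
  have hbot₁ : (⊥ : P) ∉ A₁ := antichain_bot_not_mem hac₁ h2
  intro x hx
  rw [inters_main h1 h2]
  intro a ha hane
  obtain ⟨s, hs, hsa⟩ := h (mem_upFilter_self ha)
  obtain ⟨z, hz, hzx, hzs⟩ := meets_of_mem_inters h3 h4 hx hs
    (fun hh => hbot₂ (hh ▸ hs))
  exact ⟨z, hz, hzx, hzs.trans hsa⟩

end Aux

theorem stmt_17 {P : Type*} [PartialOrder P] [BoundedOrder P] [Fintype P] [Nontrivial P] :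
    Set.BijOn (bmap P) (Antb P) (Antb P) ∧
    ∀ B₁ ∈ Antb P, ∀ B₂ ∈ Antb P,
      (upFilter P B₁ ⊆ upFilter P B₂ ↔ upFilter P (bmap P B₂) ⊆ upFilter P (bmap P B₁)) := by
  constructor
  · refine ⟨fun B hB => bmap_mem_Antb hB, ?_, ?_⟩
    · intro B₁ h₁ B₂ h₂ heq
      calc B₁ = bmap P (bmap P B₁) := (bmap_bmap_of_mem_Antb h₁).symm
        _ = bmap P (bmap P B₂) := by rw [heq]
        _ = B₂ := bmap_bmap_of_mem_Antb h₂
    · intro B hB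
      exact ⟨bmap P B, bmap_mem_Antb hB, bmap_bmap_of_mem_Antb hB⟩
  · intro B₁ h₁ B₂ h₂
    constructor
    · intro h
      rw [upFilter_bmap, upFilter_bmap]
      exact inters_antitone (antichain_of_mem_Antb h₁) (antichain_of_mem_Antb h₂) h
    · intro h
      have := inters_antitone (bmap_antichain B₂) (bmap_antichain B₁) h
      rw [← upFilter_bmap, ← upFilter_bmap] at this
      calc upFilter P B₁ = upFilter P (bmap P (bmap P B₁)) := by
            rw [bmap_bmap_of_mem_Antb h₁]
        _ ⊆ upFilter P (bmap P (bmap P B₂)) := this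
        _ = upFilter P B₂ := by rw [bmap_bmap_of_mem_Antb h₂]
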